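/- Let C and B̂ be real m×n matrices with rank(C) ≤ R₀ and rank(B̂) ≤ R₀ for an integer R₀ ≥ 1. Then ‖C‖_F² − ‖B̂‖_F² ≤ √(2R₀) · (2σ₁(C) + ‖B̂ − C‖_F)². -/

import Mathlib

open Matrix

/-- `Aᵀ * A` is Hermitian for a real matrix `A`. -/
lemma herm {m n : ℕ} (A : Matrix (Fin m) (Fin n) ℝ) : (Aᵀ * A).IsHermitian := by
  have h := Matrix.isHermitian_conjTranspose_mul_self A
  rw [Matrix.conjTranspose_eq_transpose_of_trivial] at h
  simpa [Matrix.conjTranspose] using h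

/-- The largest singular value of a real matrix: the square root of the largest
eigenvalue of `Aᵀ * A`. -/
noncomputable def sigma1 {m n : ℕ} (A : Matrix (Fin m) (Fin n) ℝ) : ℝ :=
  Real.sqrt (⨆ i, (herm A).eigenvalues i)

/-- The Frobenius norm `‖A‖_F = √(trace (Aᵀ A))`. -/
noncomputable def frobNorm {m n : ℕ} (A : Matrix (Fin m) (Fin n) ℝ) : ℝ :=
  Real.sqrt (Matrix.trace (Aᵀ * A))

lemma trace_eq_sum_eig {n : ℕ} {A : Matrix (Fin n) (Fin n) ℝ} (hA : A.IsHermitian) :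
    A.trace = ∑ i, hA.eigenvalues i := by
  conv_lhs => rw [hA.spectral_theorem, Unitary.conjStarAlgAut_apply]
  rw [Matrix.trace_mul_cycle]
  simp [Unitary.coe_star_mul_self, Matrix.trace_diagonal]

lemma trace_eq_sum_sq {m n : ℕ} (A : Matrix (Fin m) (Fin n) ℝ) :
    Matrix.trace (Aᵀ * A) = ∑ p : Fin m × Fin n, A p.1 p.2 ^ 2 := by
  rw [Fintype.sum_prod_type]
  simp [Matrix.trace, Matrix.mul_apply, Matrix.diag, sq]
  exact Finset.sum_comm

lemma trace_nonneg' {m n : ℕ} (A : Matrix (Fin m) (Fin n) ℝ) :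
    0 ≤ Matrix.trace (Aᵀ * A) := by
  rw [trace_eq_sum_sq]
  exact Finset.sum_nonneg fun p _ => sq_nonneg _

lemma frobNorm_eq_norm {m n : ℕ} (A : Matrix (Fin m) (Fin n) ℝ) :
    frobNorm A = ‖(WithLp.equiv 2 (Fin m × Fin n → ℝ)).symm (fun p => A p.1 p.2)‖ := by
  rw [frobNorm, trace_eq_sum_sq, EuclideanSpace.norm_eq]
  congr 1
  simp [sq_abs]

lemma frobNorm_nonneg {m n : ℕ} (A : Matrix (Fin m) (Fin n) ℝ) : 0 ≤ frobNorm A :=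
  Real.sqrt_nonneg _

lemma frobNorm_sq {m n : ℕ} (A : Matrix (Fin m) (Fin n) ℝ) :
    frobNorm A ^ 2 = Matrix.trace (Aᵀ * A) :=
  Real.sq_sqrt (trace_nonneg' A)

lemma frob_triangle {m n : ℕ} (C Bhat : Matrix (Fin m) (Fin n) ℝ) :
    frobNorm C ≤ frobNorm Bhat + frobNorm (Bhat - C) := by
  rw [frobNorm_eq_norm, frobNorm_eq_norm, frobNorm_eq_norm]
  have h : (WithLp.equiv 2 (Fin m × Fin n → ℝ)).symm (fun p => C p.1 p.2)
      = (WithLp.equiv 2 (Fin m × Fin n → ℝ)).symm (fun p => Bhat p.1 p.2)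
        - (WithLp.equiv 2 (Fin m × Fin n → ℝ)).symm (fun p => (Bhat - C) p.1 p.2) := by
    ext p
    simp [Matrix.sub_apply]
  rw [h]
  exact norm_sub_le _ _

lemma frob_le_sqrt_rank {m n : ℕ} (C : Matrix (Fin m) (Fin n) ℝ) (R₀ : ℕ)
    (hC : C.rank ≤ R₀) : frobNorm C ≤ Real.sqrt R₀ * sigma1 C := by
  rcases Nat.eq_zero_or_pos n with hn | hn
  · subst hn
    have : Matrix.trace (Cᵀ * C) = 0 := by
      simp [Matrix.trace]
    rw [frobNorm, this, Real.sqrt_zero]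
    exact mul_nonneg (Real.sqrt_nonneg _) (Real.sqrt_nonneg _)
  · haveI : Nonempty (Fin n) := ⟨⟨0, hn⟩⟩
    set hA := herm C
    set μ := ⨆ i, hA.eigenvalues i with hμ
    have hbdd : BddAbove (Set.range hA.eigenvalues) := Set.Finite.bddAbove (Set.finite_range _)
    have hle : ∀ i, hA.eigenvalues i ≤ μ := fun i => le_ciSup hbdd i
    have hnn : ∀ i, 0 ≤ hA.eigenvalues i := fun i =>
      (Matrix.PosSemidef.eigenvalues_nonneg ?_ i)
    swap
    · have := Matrix.posSemidef_conjTranspose_mul_self C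
      simpa [Matrix.conjTranspose_eq_transpose_of_trivial] using this
    have hμ0 : 0 ≤ μ := le_trans (hnn (Classical.arbitrary _)) (hle _)
    -- trace ≤ R₀ * μ
    have hcard : (Finset.univ.filter fun i => hA.eigenvalues i ≠ 0).card ≤ R₀ := by
      have hr : C.rank = Fintype.card {i // hA.eigenvalues i ≠ 0} := by
        rw [← Matrix.rank_transpose_mul_self C]
        exact hA.rank_eq_card_non_zero_eigs
      rw [Fintype.card_subtype] at hr
      omega
    have htr : Matrix.trace (Cᵀ * C) ≤ (R₀ : ℝ) * μ := by
      rw [trace_eq_sum_eig hA]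
      have h1 : ∑ i, hA.eigenvalues i
          = ∑ i ∈ Finset.univ.filter fun i => hA.eigenvalues i ≠ 0, hA.eigenvalues i := by
        rw [Finset.sum_filter_ne_zero]
      rw [h1]
      calc ∑ i ∈ Finset.univ.filter fun i => hA.eigenvalues i ≠ 0, hA.eigenvalues i
          ≤ ∑ _i ∈ Finset.univ.filter fun i => hA.eigenvalues i ≠ 0, μ :=
            Finset.sum_le_sum fun i _ => hle i
        _ = ((Finset.univ.filter fun i => hA.eigenvalues i ≠ 0).card : ℝ) * μ := by
            rw [Finset.sum_const, nsmul_eq_mul]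
        _ ≤ (R₀ : ℝ) * μ := by
            apply mul_le_mul_of_nonneg_right _ hμ0
            exact_mod_cast hcard
    calc frobNorm C = Real.sqrt (Matrix.trace (Cᵀ * C)) := rfl
      _ ≤ Real.sqrt ((R₀ : ℝ) * μ) := Real.sqrt_le_sqrt htr
      _ = Real.sqrt R₀ * sigma1 C := by rw [Real.sqrt_mul (Nat.cast_nonneg _)]; rfl


/-- Difference of squared Frobenius norms of two rank-`R₀` matrices:
`‖C‖_F² − ‖B̂‖_F² ≤ √(2R₀)·(2σ₁(C) + ‖B̂ − C‖_F)²`. -/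
theorem stmt_10 {m n : ℕ} (C Bhat : Matrix (Fin m) (Fin n) ℝ)
    (R₀ : ℕ) (hR₀ : 1 ≤ R₀) (hC : C.rank ≤ R₀) (hB : Bhat.rank ≤ R₀) :
    frobNorm C ^ 2 - frobNorm Bhat ^ 2 ≤
      Real.sqrt (2 * R₀) * (2 * sigma1 C + frobNorm (Bhat - C)) ^ 2 := by
  set a := frobNorm C
  set b := frobNorm Bhat
  set d := frobNorm (Bhat - C)
  set s := sigma1 C
  set r := Real.sqrt R₀
  set t := Real.sqrt (2 * R₀)
  have ha : 0 ≤ a := frobNorm_nonneg _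
  have hb' : 0 ≤ b := frobNorm_nonneg _
  have hd : 0 ≤ d := frobNorm_nonneg _
  have hs : 0 ≤ s := Real.sqrt_nonneg _
  have hr : 0 ≤ r := Real.sqrt_nonneg _
  have hrt : r ≤ t := Real.sqrt_le_sqrt (by push_cast; linarith [Nat.cast_nonneg (α := ℝ) R₀])
  have htri : a ≤ b + d := frob_triangle C Bhat
  have hars : a ≤ r * s := frob_le_sqrt_rank C R₀ hC
  have ht : 0 ≤ t := le_trans hr hrt
  rcases le_or_gt a b with hab | hab
  · have hL : a ^ 2 - b ^ 2 ≤ 0 := by nlinarith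
    have hR : 0 ≤ t * (2 * s + d) ^ 2 := mul_nonneg ht (sq_nonneg _)
    linarith
  · have h1 : a ^ 2 - b ^ 2 ≤ (a + b) * d := by nlinarith
    have h2 : (a + b) * d ≤ 2 * (r * s) * d := by
      apply mul_le_mul_of_nonneg_right _ hd
      linarith
    have h3 : 2 * (r * s) * d ≤ t * (4 * (s * d)) := by
      have : 0 ≤ s * d := mul_nonneg hs hd
      nlinarith
    have h4 : t * (4 * (s * d)) ≤ t * (2 * s + d) ^ 2 := by
      apply mul_le_mul_of_nonneg_left _ ht
      nlinarith [sq_nonneg d, sq_nonneg s]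
    linarith
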